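/- Computing the maximum weight common subsequence of k strings of length n over alphabet Σ with weights w: Σ → {1,...,K} reduces to computing the k-LCS of k strings of length at most K·n: replacing each symbol ℓ in each string by w(ℓ) consecutive copies of ℓ makes the length of the longest common subsequence of the k resulting strings equal to the maximum total weight of a common subsequence of the k original strings. -/

import Mathlib

/-- Length of a longest common subsequence of `k` lists. -/
noncomputable def klcs {k : ℕ} {α : Type*} (P : Fin k → List α) : ℕ :=
  sSup {n | ∃ z : List α, (∀ i, z.Sublist (P i)) ∧ z.length = n}

/-- Maximum total weight of a common subsequence of `k` lists. -/
noncomputable def kwlcs {k : ℕ} {α : Type*} (w : α → ℕ) (P : Fin k → List α) : ℕ :=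
  sSup {n | ∃ z : List α, (∀ i, z.Sublist (P i)) ∧ (z.map w).sum = n}

/-- The blow-up map: each symbol `c` is replaced by `w c` consecutive copies of `c`. -/
def blow {α : Type*} (w : α → ℕ) (s : List α) : List α :=
  (s.map fun c => List.replicate (w c) c).flatten

namespace KwlcsAux

variable {α : Type*}

/-- classical boolean equality test -/
noncomputable def pEq (c : α) : α → Bool := fun x => @decide (x = c) (Classical.propDecidable _)

@[simp] lemma pEq_iff (c x : α) : pEq c x = true ↔ x = c := by
  simp [pEq]

@[simp] lemma pEq_self (c : α) : pEq c c = true := by simp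

/-- canonical "rounding up" map: group into maximal runs, round each run `c^m` up to
`c^{⌈m / w c⌉}` copies. -/
noncomputable def g (w : α → ℕ) : List α → List α
  | [] => []
  | c :: u =>
      List.replicate (((u.takeWhile (pEq c)).length + 1 + (w c - 1)) / w c) c
        ++ g w (u.dropWhile (pEq c))
termination_by l => l.length
decreasing_by
  simpa using Nat.lt_succ_of_le (List.dropWhile_sublist (pEq c)).length_le

@[simp] lemma blow_nil (w : α → ℕ) : blow w ([] : List α) = [] := by simp [blow]

lemma blow_cons (w : α → ℕ) (c : α) (s : List α) :
    blow w (c :: s) = List.replicate (w c) c ++ blow w s := by simp [blow]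

lemma length_blow (w : α → ℕ) (z : List α) :
    (blow w z).length = (z.map w).sum := by
  induction z with
  | nil => simp
  | cons c z ih => simp [blow_cons, ih]

lemma blow_sublist (w : α → ℕ) {z s : List α} (h : z.Sublist s) :
    (blow w z).Sublist (blow w s) := by
  induction h with
  | slnil => simp
  | cons c h ih =>
      rw [blow_cons]
      exact ih.trans (List.sublist_append_right _ _)
  | cons_cons c h ih =>
      rw [blow_cons, blow_cons]
      exact (List.Sublist.refl _).append ih

lemma length_le_weight (w : α → ℕ) (hw : ∀ c, 1 ≤ w c) (z : List α) :
    z.length ≤ (z.map w).sum := by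
  induction z with
  | nil => simp
  | cons c z ih => have := hw c; simp only [List.map_cons, List.sum_cons, List.length_cons]; omega

lemma takeWhile_rep_append (c : α) (a : ℕ) (v : List α) :
    List.takeWhile (pEq c) (List.replicate a c ++ v)
      = List.replicate a c ++ List.takeWhile (pEq c) v := by
  induction a with
  | zero => simp
  | succ a ih => simp [List.replicate_succ, List.takeWhile_cons, ih]

lemma dropWhile_rep_append (c : α) (a : ℕ) (v : List α) :
    List.dropWhile (pEq c) (List.replicate a c ++ v) = List.dropWhile (pEq c) v := by
  induction a with
  | zero => simp
  | succ a ih => simp [List.replicate_succ, List.dropWhile_cons, ih]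

lemma takeWhile_dropWhile_nil (p : α → Bool) (l : List α) :
    List.takeWhile p (List.dropWhile p l) = [] := by
  induction l with
  | nil => simp
  | cons c l ih =>
      by_cases h : p c = true
      · simpa [List.dropWhile_cons, h] using ih
      · simp [List.dropWhile_cons, h, List.takeWhile_cons, h]

/-- the key computation: `g` on a run followed by a non-`c`-starting list. -/
lemma g_rep_append (w : α → ℕ) (c : α) (a : ℕ) (v : List α)
    (hv : List.takeWhile (pEq c) v = []) :
    g w (List.replicate a c ++ v)
      = List.replicate ((a + (w c - 1)) / w c) c ++ g w v := by
  cases a with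
  | zero =>
      have : (w c - 1) / w c = 0 := by
        rcases Nat.eq_zero_or_pos (w c) with h | h
        · simp [h]
        · exact Nat.div_eq_of_lt (by omega)
      simp [this]
  | succ a =>
      rw [List.replicate_succ, List.cons_append, g]
      rw [takeWhile_rep_append, dropWhile_rep_append, hv]
      have hdrop : List.dropWhile (pEq c) v = v := by
        have h3 := List.takeWhile_append_dropWhile (p := pEq c) (l := v)
        rw [hv, List.nil_append] at h3
        exact h3
      rw [hdrop, List.append_nil]
      simp

lemma decomp (c : α) (u : List α) :
    u = List.replicate (u.takeWhile (pEq c)).length c ++ u.dropWhile (pEq c) := by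
  conv_lhs => rw [← List.takeWhile_append_dropWhile (p := pEq c) (l := u)]
  congr 1
  rw [List.eq_replicate_iff]
  exact ⟨rfl, fun b hb => by simpa using List.mem_takeWhile_imp hb⟩

/-- Lemma 1: the weight of `g u` is at least the length of `u`. -/
lemma length_le_weight_g (w : α → ℕ) (hw : ∀ c, 1 ≤ w c) (u : List α) :
    u.length ≤ ((g w u).map w).sum := by
  induction u using g.induct with
  | case1 => simp [g]
  | case2 c u ih =>
      rw [g]
      have hWc := hw c
      set a := (u.takeWhile (pEq c)).length with ha
      have hlen : a + (u.dropWhile (pEq c)).length = u.length := by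
        have h3 := congrArg List.length (List.takeWhile_append_dropWhile (p := pEq c) (l := u))
        rwa [List.length_append] at h3
      have harith : a + 1 ≤ ((a + 1 + (w c - 1)) / w c) * w c := by
        have h1 := Nat.div_add_mod (a + 1 + (w c - 1)) (w c)
        have h2 : (a + 1 + (w c - 1)) % w c < w c := Nat.mod_lt _ (by omega)
        rw [Nat.mul_comm]
        omega
      simp only [List.map_append, List.map_replicate, List.sum_append, List.sum_replicate,
        smul_eq_mul, List.length_cons]
      omega

/-- arithmetic: since `m ≤ W`, rounding up `m + a` costs at most one more block. -/
lemma ceil_le (W m a : ℕ) (hW : 1 ≤ W) (hm : m ≤ W) :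
    (m + a + (W - 1)) / W ≤ 1 + (a + (W - 1)) / W := by
  have h1 : m + a + (W - 1) ≤ (a + (W - 1)) + W := by omega
  calc (m + a + (W - 1)) / W ≤ ((a + (W - 1)) + W) / W := Nat.div_le_div_right h1
    _ = (a + (W - 1)) / W + 1 := Nat.add_div_right _ (by omega)
    _ = 1 + (a + (W - 1)) / W := by omega

/-- Lemma 2: if `u` is a sublist of the blow-up of `s`, then `g u` is a sublist of `s`. -/
lemma g_sublist (w : α → ℕ) (hw : ∀ c, 1 ≤ w c) :
    ∀ (s u : List α), u.Sublist (blow w s) → (g w u).Sublist s := by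
  intro s
  induction s with
  | nil =>
      intro u hu
      simp only [blow_nil, List.sublist_nil] at hu
      simp [hu, g]
  | cons c t ih =>
      intro u hu
      rw [blow_cons, List.sublist_append_iff] at hu
      obtain ⟨u₁, u₂, rfl, h1, h2⟩ := hu
      rw [List.sublist_replicate_iff] at h1
      obtain ⟨m, hm, rfl⟩ := h1
      set a := (u₂.takeWhile (pEq c)).length with ha
      set v := u₂.dropWhile (pEq c) with hv
      have hvnil : List.takeWhile (pEq c) v = [] := takeWhile_dropWhile_nil _ _
      have hu₂ : u₂ = List.replicate a c ++ v := decomp c u₂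
      have hg2 : g w u₂ = List.replicate ((a + (w c - 1)) / w c) c ++ g w v := by
        rw [hu₂]; exact g_rep_append w c a v hvnil
      have hgu : g w (List.replicate m c ++ u₂)
          = List.replicate ((m + a + (w c - 1)) / w c) c ++ g w v := by
        rw [hu₂, ← List.append_assoc, ← List.replicate_add]
        exact g_rep_append w c (m + a) v hvnil
      have hstep : (g w (List.replicate m c ++ u₂)).Sublist (c :: g w u₂) := by
        rw [hgu, hg2]
        have : (List.replicate ((m + a + (w c - 1)) / w c) c).Sublist
            (List.replicate (1 + (a + (w c - 1)) / w c) c) :=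
          (List.replicate_sublist_replicate c).2 (ceil_le (w c) m a (hw c) hm)
        calc (List.replicate ((m + a + (w c - 1)) / w c) c ++ g w v).Sublist
              (List.replicate (1 + (a + (w c - 1)) / w c) c ++ g w v) :=
              this.append (List.Sublist.refl _)
          _ = c :: (List.replicate ((a + (w c - 1)) / w c) c ++ g w v) := by
              rw [List.replicate_add]; simp
      exact hstep.trans ((ih u₂ h2).cons₂ c)

end KwlcsAux

/-- computing a maximum-weight common subsequence of `k` strings
(weights in `{1,…,K}`) reduces to the unweighted `k`-LCS of the blown-up
strings, which have length at most `K·n`: the `k`-LCS of the blow-ups equals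
the `k`-WLCS of the originals. -/
theorem kwlcs_eq_klcs_blow {k : ℕ} {α : Type*} (K : ℕ) (w : α → ℕ)
    (hw : ∀ c : α, 1 ≤ w c ∧ w c ≤ K) (P : Fin k → List α) :
    (∀ i, (blow w (P i)).length ≤ K * (P i).length) ∧
    klcs (fun i => blow w (P i)) = kwlcs w P := by
  open KwlcsAux in
  have hw1 : ∀ c, 1 ≤ w c := fun c => (hw c).1
  constructor
  · intro i
    rw [length_blow]
    induction P i with
    | nil => simp
    | cons c s ih =>
        have := (hw c).2
        simp only [List.map_cons, List.sum_cons, List.length_cons]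
        calc w c + (s.map w).sum ≤ K + K * s.length := by omega
          _ = K * (s.length + 1) := by ring
  · set A : Set ℕ := {n | ∃ z : List α, (∀ i, z.Sublist (blow w (P i))) ∧ z.length = n} with hA
    set B : Set ℕ := {n | ∃ z : List α, (∀ i, z.Sublist (P i)) ∧ (z.map w).sum = n} with hB
    have hBA : B ⊆ A := by
      rintro n ⟨z, hz, rfl⟩
      exact ⟨blow w z, fun i => blow_sublist w (hz i), length_blow w z⟩
    have hAB : ∀ n ∈ A, ∃ m ∈ B, n ≤ m := by
      rintro n ⟨u, hu, rfl⟩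
      exact ⟨((g w u).map w).sum, ⟨g w u, fun i => g_sublist w hw1 (P i) u (hu i), rfl⟩,
        length_le_weight_g w hw1 u⟩
    have hA0 : (0 : ℕ) ∈ A := ⟨[], fun i => List.nil_sublist _, rfl⟩
    have hB0 : (0 : ℕ) ∈ B := ⟨[], fun i => List.nil_sublist _, rfl⟩
    show sSup A = sSup B
    by_cases hbdd : BddAbove A
    · have hBbdd : BddAbove B := hbdd.mono hBA
      apply le_antisymm
      · have hmem : sSup A ∈ A := Nat.sSup_mem ⟨0, hA0⟩ hbdd
        obtain ⟨m, hmB, hle⟩ := hAB _ hmem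
        exact hle.trans (le_csSup hBbdd hmB)
      · exact csSup_le_csSup hbdd ⟨0, hB0⟩ hBA
    · have hBbdd : ¬ BddAbove B := by
        intro ⟨b, hb⟩
        apply hbdd
        refine ⟨b, fun n hn => ?_⟩
        obtain ⟨m, hmB, hle⟩ := hAB n hn
        exact hle.trans (hb hmB)
      rw [csSup_of_not_bddAbove hbdd, csSup_of_not_bddAbove hBbdd]
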